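/- Let {f_i} be a d-decaying system with n ≤ Φ(n) ≤ βn, and Y_{Φ,ε} as above with a_n(x) ≤ l_{n+1} ≤ βγ·l_n for all n. Then there is a sequence v_n → 1 such that for every x ∈ Y_{Φ,ε}, (log r_{n+1}(x))/(log r_n(x)) < v_n, where r_n(x) = |C_n(x)|. -/

import Mathlib

open Set Filter Topology MeasureTheory

/-- A `d`-decaying iterated function system on `[0,1]`: `C¹` maps `f_i` (for `i ≥ 1`)
with derivative `f' i`, satisfying uniform eventual contraction, disjointness of the
open images, and polynomial decay `ξ_i ≍ i^{-d}` of the derivative bounds. -/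
structure DDecaying (d : ℝ) where
  f : ℕ → ℝ → ℝ
  f' : ℕ → ℝ → ℝ
  ξ : ℕ → ℝ
  lam : ℕ → ℝ
  hd : 1 < d
  maps : ∀ i : ℕ, 1 ≤ i → MapsTo (f i) (Icc (0:ℝ) 1) (Icc (0:ℝ) 1)
  hderiv : ∀ i : ℕ, 1 ≤ i → ∀ x ∈ Icc (0:ℝ) 1, HasDerivAt (f i) (f' i x) x
  contract : ∃ m : ℕ, 1 ≤ m ∧ ∃ A : ℝ, 0 < A ∧ A < 1 ∧
    ∀ a : Fin m → ℕ, (∀ j, 1 ≤ a j) → ∀ x ∈ Icc (0:ℝ) 1,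
      0 < |deriv ((List.ofFn fun j => f (a j)).foldr (· ∘ ·) id) x| ∧
        |deriv ((List.ofFn fun j => f (a j)).foldr (· ∘ ·) id) x| ≤ A
  derivBounds : ∀ i : ℕ, 1 ≤ i → ∀ x ∈ Icc (0:ℝ) 1, ξ i ≤ |f' i x| ∧ |f' i x| ≤ lam i
  decay : ∀ ε : ℝ, 0 < ε → ∃ C₁ : ℝ, 0 < C₁ ∧ ∃ C₂ : ℝ, 0 < C₂ ∧ ∀ i : ℕ, 1 ≤ i →
    C₁ / (i : ℝ) ^ (d + ε) ≤ ξ i ∧ lam i ≤ C₂ / (i : ℝ) ^ (d - ε)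
  disj : ∀ i j, 1 ≤ i → 1 ≤ j → i ≠ j →
    Disjoint (f i '' Ioo (0:ℝ) 1) (f j '' Ioo (0:ℝ) 1)

variable {d : ℝ}

/-- The composition `f_{a 0} ∘ f_{a 1} ∘ ⋯ ∘ f_{a (n-1)}`. -/
def DDecaying.comp (S : DDecaying d) (a : ℕ → ℕ) (n : ℕ) : ℝ → ℝ :=
  ((List.range n).map fun k => S.f (a k)).foldr (· ∘ ·) id

/-- The approximating sequence `n ↦ f_{a 0} ∘ ⋯ ∘ f_{a (n-1)} (1)` for the projection `Π`. -/
def DDecaying.projSeq (S : DDecaying d) (a : ℕ → ℕ) (n : ℕ) : ℝ :=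
  S.comp a n 1

/-- The `n`-th level cylinder determined by the digits `a 0, …, a (n-1)`. -/
def DDecaying.cyl (S : DDecaying d) (a : ℕ → ℕ) (n : ℕ) : Set ℝ :=
  S.comp a n '' Icc (0:ℝ) 1

/-- The attractor of the subsystem `{f_i}_{i ≥ k}`. -/
def DDecaying.attractor (S : DDecaying d) (k : ℕ) : Set ℝ :=
  {x | ∃ a : ℕ → ℕ, (∀ n, k ≤ a n) ∧ Tendsto (S.projSeq a) atTop (𝓝 x)}

/-- The set `X_Φ = Π{a : a_{n+1} > Φ(a_n)}` of points all of whose digits grow at rate `Φ`. -/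
def DDecaying.XPhi (S : DDecaying d) (Φ : ℕ → ℝ) : Set ℝ :=
  {x | ∃ a : ℕ → ℕ, (∀ n, 1 ≤ a n) ∧ (∀ n, Φ (a n) < (a (n + 1) : ℝ)) ∧
    Tendsto (S.projSeq a) atTop (𝓝 x)}


set_option maxHeartbeats 1000000

lemma comp_zero (S : DDecaying d) (a : ℕ → ℕ) : S.comp a 0 = id := by
  simp [DDecaying.comp]

lemma comp_succ (S : DDecaying d) (a : ℕ → ℕ) (n : ℕ) :
    S.comp a (n + 1) = S.comp a n ∘ S.f (a n) := by
  have key : ∀ (L : List (ℝ → ℝ)) (g : ℝ → ℝ),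
      L.foldr (· ∘ ·) g = L.foldr (· ∘ ·) id ∘ g := by
    intro L
    induction L with
    | nil => intro g; rfl
    | cons h t ih => intro g; simp only [List.foldr_cons]; rw [ih g, ih id]; rfl
  simp only [DDecaying.comp, List.range_succ, List.map_append, List.foldr_append,
    List.map_cons, List.map_nil, List.foldr_cons, List.foldr_nil]
  rw [key]
  rfl

lemma comp_congr (S : DDecaying d) {a b : ℕ → ℕ} {n : ℕ} (h : ∀ k < n, a k = b k) :
    S.comp a n = S.comp b n := by
  unfold DDecaying.comp
  congr 1
  apply List.map_congr_left
  intro k hk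
  rw [h k (List.mem_range.mp hk)]

lemma comp_mapsTo (S : DDecaying d) {a : ℕ → ℕ} {n : ℕ} (h : ∀ k < n, 1 ≤ a k) :
    MapsTo (S.comp a n) (Icc (0:ℝ) 1) (Icc (0:ℝ) 1) := by
  induction n with
  | zero => simp [comp_zero, MapsTo]
  | succ n ih =>
    rw [comp_succ]
    exact (ih (fun k hk => h k (hk.trans (Nat.lt_succ_self n)))).comp
      (S.maps (a n) (h n (Nat.lt_succ_self n)))

lemma comp_hasDerivAt (S : DDecaying d) {a : ℕ → ℕ} {n : ℕ} (h : ∀ k < n, 1 ≤ a k)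
    (hξ : ∀ i, 1 ≤ i → 0 < S.ξ i) :
    ∀ x ∈ Icc (0:ℝ) 1, ∃ D : ℝ, HasDerivAt (S.comp a n) D x ∧
      (∏ k ∈ Finset.range n, S.ξ (a k)) ≤ |D| ∧
      |D| ≤ ∏ k ∈ Finset.range n, S.lam (a k) := by
  induction n with
  | zero =>
    intro x _
    refine ⟨1, ?_, by simp, by simp⟩
    simpa [comp_zero] using hasDerivAt_id x
  | succ n ih =>
    intro x hx
    have h1 : 1 ≤ a n := h n (Nat.lt_succ_self n)
    have hfx : S.f (a n) x ∈ Icc (0:ℝ) 1 := S.maps (a n) h1 hx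
    obtain ⟨D, hD, hl, hu⟩ := ih (fun k hk => h k (hk.trans (Nat.lt_succ_self n))) (S.f (a n) x) hfx
    have hf : HasDerivAt (S.f (a n)) (S.f' (a n) x) x := S.hderiv (a n) h1 x hx
    refine ⟨D * S.f' (a n) x, ?_, ?_, ?_⟩
    · rw [comp_succ]
      exact HasDerivAt.comp x hD hf
    · rw [abs_mul, Finset.prod_range_succ]
      have hb := S.derivBounds (a n) h1 x hx
      have hprodnn : (0:ℝ) ≤ ∏ k ∈ Finset.range n, S.ξ (a k) :=
        Finset.prod_nonneg fun k hk => (hξ (a k) (h k (by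
          exact (Finset.mem_range.mp hk).trans (Nat.lt_succ_self n)))).le
      exact mul_le_mul hl hb.1 (hξ (a n) h1).le (abs_nonneg D)
    · rw [abs_mul, Finset.prod_range_succ]
      have hb := S.derivBounds (a n) h1 x hx
      exact mul_le_mul hu hb.2 (abs_nonneg _) (le_trans (abs_nonneg D) hu)

lemma cyl_subset (S : DDecaying d) {a : ℕ → ℕ} {n : ℕ} (h : ∀ k < n, 1 ≤ a k) :
    S.cyl a n ⊆ Icc (0:ℝ) 1 :=
  (comp_mapsTo S h).image_subset

lemma diam_cyl_le_one (S : DDecaying d) {a : ℕ → ℕ} {n : ℕ} (h : ∀ k < n, 1 ≤ a k) :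
    Metric.diam (S.cyl a n) ≤ 1 := by
  have := Metric.diam_mono (cyl_subset S h) (Metric.isBounded_Icc (0:ℝ) 1)
  rwa [Real.diam_Icc zero_le_one, sub_zero] at this

lemma diam_cyl_le_prod (S : DDecaying d) {a : ℕ → ℕ} {n : ℕ} (h : ∀ k < n, 1 ≤ a k)
    (hξ : ∀ i, 1 ≤ i → 0 < S.ξ i) :
    Metric.diam (S.cyl a n) ≤ ∏ k ∈ Finset.range n, S.lam (a k) := by
  have hlamnn : (0:ℝ) ≤ ∏ k ∈ Finset.range n, S.lam (a k) := by
    apply Finset.prod_nonneg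
    intro k hk
    have h1 := h k (Finset.mem_range.mp hk)
    have hb := S.derivBounds (a k) h1 0 (by norm_num)
    exact le_trans (hξ (a k) h1).le (le_trans hb.1 hb.2)
  apply Metric.diam_le_of_forall_dist_le hlamnn
  rintro _ ⟨x, hx, rfl⟩ _ ⟨y, hy, rfl⟩
  have hder : ∀ z ∈ Icc (0:ℝ) 1,
      HasDerivWithinAt (S.comp a n) (deriv (S.comp a n) z) (Icc (0:ℝ) 1) z := by
    intro z hz
    obtain ⟨D, hD, _, _⟩ := comp_hasDerivAt S h hξ z hz
    rw [hD.deriv]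
    exact hD.hasDerivWithinAt
  have hbound : ∀ z ∈ Icc (0:ℝ) 1,
      ‖deriv (S.comp a n) z‖ ≤ ∏ k ∈ Finset.range n, S.lam (a k) := by
    intro z hz
    obtain ⟨D, hD, _, hu⟩ := comp_hasDerivAt S h hξ z hz
    rw [hD.deriv, Real.norm_eq_abs]
    exact hu
  have := (convex_Icc (0:ℝ) 1).norm_image_sub_le_of_norm_hasDerivWithin_le hder hbound hy hx
  rw [Real.dist_eq]
  calc |S.comp a n x - S.comp a n y| ≤ (∏ k ∈ Finset.range n, S.lam (a k)) * ‖x - y‖ := by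
        simpa [Real.norm_eq_abs] using this
    _ ≤ (∏ k ∈ Finset.range n, S.lam (a k)) * 1 := by
        apply mul_le_mul_of_nonneg_left _ hlamnn
        rw [Real.norm_eq_abs, abs_le]
        constructor <;> [linarith [hx.1, hy.2]; linarith [hx.2, hy.1]]
    _ = ∏ k ∈ Finset.range n, S.lam (a k) := mul_one _

lemma prod_le_diam_cyl (S : DDecaying d) {a : ℕ → ℕ} {n : ℕ} (h : ∀ k < n, 1 ≤ a k)
    (hξ : ∀ i, 1 ≤ i → 0 < S.ξ i) :
    ∏ k ∈ Finset.range n, S.ξ (a k) ≤ Metric.diam (S.cyl a n) := by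
  have hcont : ContinuousOn (S.comp a n) (Icc (0:ℝ) 1) := by
    intro z hz
    obtain ⟨D, hD, _, _⟩ := comp_hasDerivAt S h hξ z hz
    exact hD.continuousAt.continuousWithinAt
  have hderiv : ∀ z ∈ Ioo (0:ℝ) 1, HasDerivAt (S.comp a n) (deriv (S.comp a n) z) z := by
    intro z hz
    obtain ⟨D, hD, _, _⟩ := comp_hasDerivAt S h hξ z (Ioo_subset_Icc_self hz)
    rw [hD.deriv]; exact hD
  obtain ⟨c, hc, hslope⟩ := exists_hasDerivAt_eq_slope (S.comp a n) (deriv (S.comp a n))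
    zero_lt_one hcont hderiv
  obtain ⟨D, hD, hl, _⟩ := comp_hasDerivAt S h hξ c (Ioo_subset_Icc_self hc)
  rw [hD.deriv] at hslope
  have hbd : Bornology.IsBounded (S.cyl a n) :=
    Metric.isBounded_Icc (0:ℝ) 1 |>.subset (cyl_subset S h)
  have h0 : S.comp a n 0 ∈ S.cyl a n := ⟨0, by norm_num, rfl⟩
  have h1 : S.comp a n 1 ∈ S.cyl a n := ⟨1, by norm_num, rfl⟩
  calc ∏ k ∈ Finset.range n, S.ξ (a k) ≤ |D| := hl
    _ = |S.comp a n 1 - S.comp a n 0| := by rw [hslope]; simp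
    _ = dist (S.comp a n 1) (S.comp a n 0) := (Real.dist_eq _ _).symm
    _ ≤ Metric.diam (S.cyl a n) := Metric.dist_le_diam_of_mem hbd h1 h0

lemma sumlog_linear (M : ℝ) : ∃ N : ℕ, ∀ n ≥ N,
    M * (n + 1) ≤ ∑ k ∈ Finset.range n, Real.log (k + 2) := by
  set M' : ℝ := max M 0 with hM'
  have hM'0 : 0 ≤ M' := le_max_right _ _
  set K : ℕ := ⌈Real.exp (2 * M')⌉₊ with hK
  refine ⟨2 * K + 2, fun n hn => ?_⟩
  have hterm : ∀ k : ℕ, (0:ℝ) ≤ Real.log (k + 2) := by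
    intro k
    apply Real.log_nonneg
    have : (0:ℝ) ≤ (k:ℝ) := Nat.cast_nonneg k
    linarith
  have hsub : Finset.Ico K n ⊆ Finset.range n := by
    intro k hk
    exact Finset.mem_range.mpr (Finset.mem_Ico.mp hk).2
  have h1 : ∑ k ∈ Finset.Ico K n, Real.log (k + 2) ≤ ∑ k ∈ Finset.range n, Real.log (k + 2) :=
    Finset.sum_le_sum_of_subset_of_nonneg hsub (fun k _ _ => hterm k)
  have h2 : ∀ k ∈ Finset.Ico K n, (2 * M' : ℝ) ≤ Real.log (k + 2) := by
    intro k hk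
    have hkK : K ≤ k := (Finset.mem_Ico.mp hk).1
    have : Real.exp (2 * M') ≤ (k:ℝ) + 2 := by
      have := Nat.le_ceil (Real.exp (2 * M'))
      have hKk : (K:ℝ) ≤ (k:ℝ) := Nat.cast_le.mpr hkK
      linarith
    calc (2*M':ℝ) = Real.log (Real.exp (2*M')) := (Real.log_exp _).symm
      _ ≤ Real.log ((k:ℝ)+2) := Real.log_le_log (Real.exp_pos _) this
  have h3 : (Finset.Ico K n).card • (2*M') ≤ ∑ k ∈ Finset.Ico K n, Real.log (k + 2) :=
    Finset.card_nsmul_le_sum _ _ _ h2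
  have hcard : (Finset.Ico K n).card = n - K := Nat.card_Ico K n
  have hnK : K ≤ n := by omega
  have hcast : ((n - K : ℕ) : ℝ) = (n:ℝ) - K := by
    rw [Nat.cast_sub hnK]
  have h4 : ((n:ℝ) - K) * (2 * M') ≤ ∑ k ∈ Finset.Ico K n, Real.log (k + 2) := by
    rw [hcard] at h3
    rwa [nsmul_eq_mul, hcast] at h3
  have h5 : M * ((n:ℝ) + 1) ≤ ((n:ℝ) - K) * (2 * M') := by
    have hM : M ≤ M' := le_max_left _ _
    have hn' : (2 * K + 2 : ℝ) ≤ (n:ℝ) := by exact_mod_cast hn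
    nlinarith [hM'0, hn']
  linarith

lemma key_bound (d : ℝ) (S : DDecaying d) (β γ : ℝ) (hβ : 1 ≤ β) (hγ : 1 ≤ γ)
    (Φ : ℕ → ℝ)
    (hΦ : ∀ n : ℕ, 1 ≤ n → (n : ℝ) ≤ Φ n ∧ Φ n ≤ β * n)
    (l : ℕ → ℕ) (hl : ∀ n : ℕ, 1 ≤ n → 1 ≤ l n ∧ (l (n + 1) : ℝ) ≤ β * γ * l n)
    (δ : ℝ) (hδ : 0 < δ) :
    ∃ N : ℕ, ∀ n, N ≤ n → ∀ a : ℕ → ℕ,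
      (∀ k, k ≤ n → Φ (l (k + 1)) < (a k : ℝ) ∧ a k ≤ l (k + 2)) →
      Real.log (Metric.diam (S.cyl a (n + 1))) / Real.log (Metric.diam (S.cyl a n))
        < 1 + δ := by
  have hd : 1 < d := S.hd
  set δ₂ : ℝ := min δ 1 with hδ₂def
  have hδ₂pos : 0 < δ₂ := lt_min hδ one_pos
  have hδ₂le1 : δ₂ ≤ 1 := min_le_right _ _
  have hδ₂leδ : δ₂ ≤ δ := min_le_left _ _
  set ε' : ℝ := d * δ₂ / (8 + δ₂) with hε'def
  have hε'pos : 0 < ε' := by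
    apply div_pos (mul_pos (by linarith) hδ₂pos) (by linarith)
  have hε'le : ε' ≤ d / 2 := by
    rw [hε'def, div_le_div_iff₀ (by linarith) (by norm_num)]
    nlinarith
  have hE1 : d + ε' ≤ (1 + δ₂ / 4) * (d - ε') := by
    have h8 : (0:ℝ) < 8 + δ₂ := by linarith
    have hkey : ε' * (8 + δ₂) = d * δ₂ := by
      rw [hε'def]; field_simp
    nlinarith [hkey, h8, hδ₂pos, hd]
  obtain ⟨C₁, hC₁, C₂, hC₂, hdecay⟩ := S.decay ε' hε'pos
  have hξpos : ∀ i : ℕ, 1 ≤ i → 0 < S.ξ i := by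
    intro i hi
    have hip : (0:ℝ) < (i:ℝ) := by exact_mod_cast hi
    exact lt_of_lt_of_le (div_pos hC₁ (Real.rpow_pos_of_pos hip _)) (hdecay i hi).1
  have hlampos : ∀ i : ℕ, 1 ≤ i → 0 < S.lam i := by
    intro i hi
    have hb := S.derivBounds i hi 0 (by norm_num)
    exact lt_of_lt_of_le (hξpos i hi) (hb.1.trans hb.2)
  -- logarithmic bounds on ξ and lam
  have hξlog : ∀ i : ℕ, 1 ≤ i →
      Real.log C₁ - (d + ε') * Real.log i ≤ Real.log (S.ξ i) := by
    intro i hi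
    have hip : (0:ℝ) < (i:ℝ) := by exact_mod_cast hi
    have hrp : (0:ℝ) < (i:ℝ) ^ (d + ε') := Real.rpow_pos_of_pos hip _
    have h1 : Real.log (C₁ / (i:ℝ) ^ (d + ε')) = Real.log C₁ - (d + ε') * Real.log i := by
      rw [Real.log_div hC₁.ne' hrp.ne', Real.log_rpow hip]
    rw [← h1]
    exact Real.log_le_log (div_pos hC₁ hrp) (hdecay i hi).1
  have hlamlog : ∀ i : ℕ, 1 ≤ i →
      Real.log (S.lam i) ≤ Real.log C₂ - (d - ε') * Real.log i := by
    intro i hi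
    have hip : (0:ℝ) < (i:ℝ) := by exact_mod_cast hi
    have hrp : (0:ℝ) < (i:ℝ) ^ (d - ε') := Real.rpow_pos_of_pos hip _
    have h1 : Real.log (C₂ / (i:ℝ) ^ (d - ε')) = Real.log C₂ - (d - ε') * Real.log i := by
      rw [Real.log_div hC₂.ne' hrp.ne', Real.log_rpow hip]
    rw [← h1]
    exact Real.log_le_log (hlampos i hi) (hdecay i hi).2
  -- constants
  set K : ℝ := Real.log (β * γ) with hKdef
  have hK0 : 0 ≤ K := Real.log_nonneg (by nlinarith)
  set K₂ : ℝ := Real.log (l 1) with hK₂def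
  have hl1 : 1 ≤ l 1 := (hl 1 le_rfl).1
  have hK₂0 : 0 ≤ K₂ := Real.log_nonneg (by exact_mod_cast hl1)
  set c₁ : ℝ := max 0 (-Real.log C₁) with hc₁def
  set c₂ : ℝ := max 0 (Real.log C₂) with hc₂def
  have hc₁0 : 0 ≤ c₁ := le_max_left _ _
  have hc₂0 : 0 ≤ c₂ := le_max_left _ _
  have hc₁' : -Real.log C₁ ≤ c₁ := le_max_right _ _
  have hc₂' : Real.log C₂ ≤ c₂ := le_max_right _ _
  have hdpos : (0:ℝ) < d := by linarith
  obtain ⟨M, hM0, hM1, hM2⟩ : ∃ M : ℝ, 0 ≤ M ∧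
      (2 * c₂ + 2 * d * (K + K₂) + c₁ + 1) * 8 ≤ 3 * δ₂ * d * M ∧
      2 * c₂ + d ≤ d * M := by
    refine ⟨8 * (2 * c₂ + 2 * d * (K + K₂) + c₁ + 1) / (3 * δ₂ * d) + 2 * c₂ / d + 1,
      by positivity, ?_, ?_⟩
    · have h1 : 3 * δ₂ * d * (8 * (2 * c₂ + 2 * d * (K + K₂) + c₁ + 1) / (3 * δ₂ * d))
          = 8 * (2 * c₂ + 2 * d * (K + K₂) + c₁ + 1) := by field_simp
      have h2 : d * (2 * c₂ / d) = 2 * c₂ := by field_simp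
      nlinarith [hc₂0, hδ₂pos, hdpos]
    · have h2 : d * (2 * c₂ / d) = 2 * c₂ := by field_simp
      have h3 : 0 ≤ d * (8 * (2 * c₂ + 2 * d * (K + K₂) + c₁ + 1) / (3 * δ₂ * d)) := by
        positivity
      nlinarith
  obtain ⟨N₀, hN₀⟩ := sumlog_linear M
  refine ⟨N₀, fun n hn a ha => ?_⟩
  -- digit facts
  have hstep : ∀ k, k ≤ n → ((l (k + 1) : ℝ) < a k ∧ a k ≤ l (k + 2)) := by
    intro k hk
    refine ⟨lt_of_le_of_lt ?_ (ha k hk).1, (ha k hk).2⟩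
    exact (hΦ (l (k + 1)) (hl (k + 1) (Nat.le_add_left 1 k)).1).1
  have hlow : ∀ k, k ≤ n → k + 2 ≤ a k := by
    intro k
    induction k with
    | zero =>
      intro _
      have h1 : (1:ℝ) ≤ (l 1 : ℝ) := by exact_mod_cast hl1
      have := (hstep 0 (Nat.zero_le n)).1
      have : (1:ℝ) < (a 0 : ℝ) := lt_of_le_of_lt h1 this
      exact_mod_cast by exact_mod_cast Nat.lt_iff_add_one_le.mp (by exact_mod_cast this)
    | succ k ih =>
      intro hk
      have hk' : k ≤ n := Nat.le_of_succ_le hk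
      have h1 : a k ≤ l (k + 2) := (hstep k hk').2
      have h2 : (l (k + 2) : ℝ) < a (k + 1) := (hstep (k + 1) hk).1
      have h3 : l (k + 2) < a (k + 1) := by exact_mod_cast h2
      have := ih hk'
      omega
  have h1ak : ∀ k, k < n + 1 → 1 ≤ a k := by
    intro k hk
    have := hlow k (Nat.lt_succ_iff.mp hk)
    omega
  have hup : ∀ k, k ≤ n → (a k : ℝ) ≤ (β * γ) ^ (k + 1) * l 1 := by
    have hlup : ∀ m : ℕ, (l (m + 2) : ℝ) ≤ (β * γ) ^ (m + 1) * l 1 := by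
      intro m
      induction m with
      | zero =>
        have := (hl 1 le_rfl).2
        simpa [pow_one] using this
      | succ m ih =>
        have h1 : (l (m + 3) : ℝ) ≤ β * γ * l (m + 2) := (hl (m + 2) (by omega)).2
        have hbg : (0:ℝ) ≤ β * γ := by nlinarith
        calc (l (m + 1 + 2) : ℝ) = (l (m + 3) : ℝ) := by norm_num
          _ ≤ β * γ * l (m + 2) := h1
          _ ≤ β * γ * ((β * γ) ^ (m + 1) * l 1) := by
              exact mul_le_mul_of_nonneg_left ih hbg
          _ = (β * γ) ^ (m + 1 + 1) * l 1 := by ring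
    intro k hk
    calc (a k : ℝ) ≤ (l (k + 2) : ℝ) := by exact_mod_cast (hstep k hk).2
      _ ≤ (β * γ) ^ (k + 1) * l 1 := hlup k
  have h1ak' : ∀ k, k < n → 1 ≤ a k := fun k hk => h1ak k (hk.trans (Nat.lt_succ_self n))
  -- diameters
  set r0 : ℝ := Metric.diam (S.cyl a n) with hr0def
  set r1 : ℝ := Metric.diam (S.cyl a (n + 1)) with hr1def
  have hPξ0pos : 0 < ∏ k ∈ Finset.range n, S.ξ (a k) :=
    Finset.prod_pos fun k hk => hξpos (a k) (h1ak' k (Finset.mem_range.mp hk))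
  have hPξ1pos : 0 < ∏ k ∈ Finset.range (n + 1), S.ξ (a k) :=
    Finset.prod_pos fun k hk => hξpos (a k) (h1ak k (Finset.mem_range.mp hk))
  have hr0pos : 0 < r0 := lt_of_lt_of_le hPξ0pos (prod_le_diam_cyl S h1ak' hξpos)
  have hr1pos : 0 < r1 := lt_of_lt_of_le hPξ1pos (prod_le_diam_cyl S h1ak hξpos)
  -- log sums
  set Q : ℝ := ∑ k ∈ Finset.range n, Real.log (a k) with hQdef
  set q : ℝ := Real.log (a n) with hqdef
  have hQ0 : 0 ≤ Q := Finset.sum_nonneg fun k hk => Real.log_nonneg (by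
    exact_mod_cast h1ak' k (Finset.mem_range.mp hk))
  have hq0 : 0 ≤ q := Real.log_nonneg (by exact_mod_cast h1ak n (Nat.lt_succ_self n))
  set X : ℝ := -Real.log r0 with hXdef
  set Y : ℝ := -Real.log r1 with hYdef
  -- Y upper bound
  have hY : Y ≤ (d + ε') * (Q + q) + (n + 1) * c₁ := by
    have hlog1 : Real.log (∏ k ∈ Finset.range (n + 1), S.ξ (a k)) ≤ Real.log r1 :=
      Real.log_le_log hPξ1pos (prod_le_diam_cyl S h1ak hξpos)
    have hlogprod : Real.log (∏ k ∈ Finset.range (n + 1), S.ξ (a k)) =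
        ∑ k ∈ Finset.range (n + 1), Real.log (S.ξ (a k)) :=
      Real.log_prod fun k hk => (hξpos (a k) (h1ak k (Finset.mem_range.mp hk))).ne'
    have hsum : ∑ k ∈ Finset.range (n + 1), (Real.log C₁ - (d + ε') * Real.log (a k)) ≤
        ∑ k ∈ Finset.range (n + 1), Real.log (S.ξ (a k)) :=
      Finset.sum_le_sum fun k hk => hξlog (a k) (h1ak k (Finset.mem_range.mp hk))
    have hexp : ∑ k ∈ Finset.range (n + 1), (Real.log C₁ - (d + ε') * Real.log (a k)) =
        (n + 1) * Real.log C₁ - (d + ε') * (Q + q) := by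
      rw [Finset.sum_sub_distrib, Finset.sum_const, Finset.card_range, ← Finset.mul_sum,
        hQdef, hqdef, Finset.sum_range_succ]
      push_cast
      ring
    have : (n + 1) * Real.log C₁ - (d + ε') * (Q + q) ≤ Real.log r1 := by
      rw [← hexp]
      exact le_trans hsum (by rw [← hlogprod] at hsum ⊢; exact hlog1)
    have hc : (n + 1 : ℝ) * (-Real.log C₁) ≤ (n + 1) * c₁ :=
      mul_le_mul_of_nonneg_left hc₁' (by positivity)
    rw [hYdef]
    linarith
  -- X lower bound
  have hX : (d - ε') * Q - n * c₂ ≤ X := by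
    have hlog0 : Real.log r0 ≤ Real.log (∏ k ∈ Finset.range n, S.lam (a k)) :=
      Real.log_le_log hr0pos (diam_cyl_le_prod S h1ak' hξpos)
    have hlogprod : Real.log (∏ k ∈ Finset.range n, S.lam (a k)) =
        ∑ k ∈ Finset.range n, Real.log (S.lam (a k)) :=
      Real.log_prod fun k hk => (hlampos (a k) (h1ak' k (Finset.mem_range.mp hk))).ne'
    have hsum : ∑ k ∈ Finset.range n, Real.log (S.lam (a k)) ≤
        ∑ k ∈ Finset.range n, (Real.log C₂ - (d - ε') * Real.log (a k)) :=
      Finset.sum_le_sum fun k hk => hlamlog (a k) (h1ak' k (Finset.mem_range.mp hk))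
    have hexp : ∑ k ∈ Finset.range n, (Real.log C₂ - (d - ε') * Real.log (a k)) =
        n * Real.log C₂ - (d - ε') * Q := by
      rw [Finset.sum_sub_distrib, Finset.sum_const, Finset.card_range, ← Finset.mul_sum,
        hQdef, nsmul_eq_mul]
    have hc : (n : ℝ) * Real.log C₂ ≤ n * c₂ :=
      mul_le_mul_of_nonneg_left hc₂' (by positivity)
    rw [hXdef]
    rw [hlogprod] at hlog0
    linarith
  -- Q is large
  have hQM : M * (n + 1) ≤ Q := by
    have hG : ∑ k ∈ Finset.range n, Real.log (k + 2) ≤ Q := by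
      apply Finset.sum_le_sum
      intro k hk
      have hk' : k < n := Finset.mem_range.mp hk
      have h2 : ((k : ℝ) + 2) ≤ (a k : ℝ) := by
        exact_mod_cast hlow k hk'.le
      exact Real.log_le_log (by positivity) h2
    exact le_trans (hN₀ n hn) hG
  -- q upper bound
  have hqup : q ≤ (n + 1) * K + K₂ := by
    have han : (0:ℝ) < (a n : ℝ) := by
      exact_mod_cast h1ak n (Nat.lt_succ_self n)
    have hbg1 : (1:ℝ) ≤ β * γ := by nlinarith
    have hbgpos : (0:ℝ) < β * γ := by linarith
    have hl1pos : (0:ℝ) < (l 1 : ℝ) := by exact_mod_cast hl1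
    have h1 : Real.log (a n) ≤ Real.log ((β * γ) ^ (n + 1) * l 1) :=
      Real.log_le_log han (hup n le_rfl)
    have h2 : Real.log ((β * γ) ^ (n + 1) * (l 1 : ℝ)) = (n + 1) * K + K₂ := by
      rw [Real.log_mul (by positivity) hl1pos.ne', Real.log_pow, hKdef, hK₂def]
      push_cast
      ring
    rw [hqdef]
    rw [h2] at h1
    exact h1
  -- positivity of X
  have hXpos : 0 < X := by
    have hdn : (0:ℝ) ≤ (n:ℝ) := Nat.cast_nonneg n
    have h1 : (d / 2) * (M * (n + 1)) ≤ (d - ε') * Q := by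
      apply mul_le_mul (by linarith) hQM (by positivity) (by linarith)
    nlinarith [hM2, hc₂0, hdpos]
  -- the main estimate
  have hmain : Y < (1 + δ₂) * X := by
    have hdn : (0:ℝ) ≤ (n:ℝ) := Nat.cast_nonneg n
    have hA : (d + ε') * Q ≤ (1 + δ₂ / 4) * (d - ε') * Q := by
      apply mul_le_mul_of_nonneg_right _ hQ0
      calc d + ε' ≤ (1 + δ₂ / 4) * (d - ε') := hE1
        _ = (1 + δ₂ / 4) * (d - ε') := rfl
    have hB : (d + ε') * q ≤ 2 * d * ((n + 1) * K + K₂) := by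
      apply mul_le_mul (by linarith) hqup hq0 (by linarith)
    have hC : (3 * δ₂ / 4) * ((d / 2) * (M * (n + 1))) ≤ (3 * δ₂ / 4) * ((d - ε') * Q) := by
      apply mul_le_mul_of_nonneg_left _ (by positivity)
      apply mul_le_mul (by linarith) hQM (by positivity) (by linarith)
    have hD : (2 * c₂ + 2 * d * (K + K₂) + c₁ + 1) * (n + 1) ≤
        (3 * δ₂ * d / 8) * (M * (n + 1)) := by
      have := mul_le_mul_of_nonneg_right hM1 (show (0:ℝ) ≤ (n+1:ℝ) by positivity)
      nlinarith
    have hE : δ₂ * ((n:ℝ) * c₂) ≤ 1 * ((n:ℝ) * c₂) :=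
      mul_le_mul_of_nonneg_right hδ₂le1 (by positivity)
    have hX2 : (1 + δ₂) * ((d - ε') * Q - n * c₂) ≤ (1 + δ₂) * X :=
      mul_le_mul_of_nonneg_left hX (by linarith)
    have hF : (0:ℝ) ≤ d * (K₂ * n) := by positivity
    have hG : (0:ℝ) ≤ c₂ * n := by positivity
    linarith [hY, hA, hB, hC, hD, hE, hX2, hF, hG]
  -- conclude
  have hratio : Real.log r1 / Real.log r0 = Y / X := by
    rw [hXdef, hYdef, neg_div_neg_eq]
  rw [hratio]
  calc Y / X < 1 + δ₂ := (div_lt_iff₀ hXpos).mpr (by linarith [hmain])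
    _ ≤ 1 + δ := by linarith

/-- With digits of `Y_{Φ,ε}` bounded by `a_n(x) ≤ l_{n+1} ≤ βγ l_n`, there is a sequence
`v_n → 1` with `log r_{n+1}(x) / log r_n(x) < v_n` on `Y_{Φ,ε}`. -/
theorem cylinder_log_ratio (d : ℝ) (S : DDecaying d) (β γ ε : ℝ) (hβ : 1 ≤ β)
    (hγ : 1 ≤ γ) (hε : 0 < ε) (hεd : ε < 1 / d) (Φ : ℕ → ℝ)
    (hΦ : ∀ n : ℕ, 1 ≤ n → (n : ℝ) ≤ Φ n ∧ Φ n ≤ β * n)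
    (l : ℕ → ℕ) (hl : ∀ n : ℕ, 1 ≤ n → 1 ≤ l n ∧ (l (n + 1) : ℝ) ≤ β * γ * l n) :
    ∃ v : ℕ → ℝ, Tendsto v atTop (𝓝 1) ∧
      ∀ a : ℕ → ℕ, (∀ n : ℕ, Φ (l (n + 1)) < (a n : ℝ) ∧ a n ≤ l (n + 2)) →
      ∀ n : ℕ, 1 ≤ n →
        Real.log (Metric.diam (S.cyl a (n + 1))) / Real.log (Metric.diam (S.cyl a n))
          < v n := by
  classical
  set ratio : (ℕ → ℕ) → ℕ → ℝ := fun b m =>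
    Real.log (Metric.diam (S.cyl b (m + 1))) / Real.log (Metric.diam (S.cyl b m))
    with hratiodef
  set RS : ℕ → Set ℝ := fun n =>
    {r | ∃ b : ℕ → ℕ, (∀ k, k ≤ n → Φ (l (k + 1)) < (b k : ℝ) ∧ b k ≤ l (k + 2)) ∧
      (∀ k, n < k → b k = 1) ∧ r = ratio b n} with hRSdef
  -- each RS n is finite
  have hfin : ∀ n : ℕ, (RS n).Finite := by
    intro n
    set B : ℕ := Finset.sup (Finset.range (n + 1)) (fun k => l (k + 2)) with hBdef
    apply Set.Finite.subset (Set.finite_range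
      (fun t : Fin (n + 1) → Fin (B + 1) =>
        ratio (fun k => if h : k < n + 1 then ((t ⟨k, h⟩ : Fin (B + 1)) : ℕ) else 1) n))
    rintro r ⟨b, hb1, hb2, rfl⟩
    refine ⟨fun k => ⟨b k, ?_⟩, ?_⟩
    · apply Nat.lt_succ_of_le
      calc b (k : ℕ) ≤ l ((k : ℕ) + 2) := (hb1 k (Nat.lt_succ_iff.mp k.isLt)).2
        _ ≤ B := Finset.le_sup (f := fun k => l (k + 2)) (Finset.mem_range.mpr k.isLt)
    · have : (fun k => if h : k < n + 1 then b k else 1) = b := by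
        funext k
        by_cases h : k < n + 1
        · simp [h]
        · simp [h, hb2 k (by omega)]
      simp only [this]
  have hbdd : ∀ n : ℕ, BddAbove (RS n) := fun n => (hfin n).bddAbove
  refine ⟨fun n => max (sSup (RS n)) 1 + 1 / (n + 1), ?_, ?_⟩
  · -- tendsto
    rw [Metric.tendsto_atTop]
    intro ε₀ hε₀
    obtain ⟨N₁, hN₁⟩ := key_bound d S β γ hβ hγ Φ hΦ l hl (ε₀ / 2) (by linarith)
    set N₂ : ℕ := ⌈(2:ℝ) / ε₀⌉₊ with hN₂def
    refine ⟨max N₁ N₂, fun n hn => ?_⟩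
    have hn₁ : N₁ ≤ n := le_trans (le_max_left _ _) hn
    have hn₂ : N₂ ≤ n := le_trans (le_max_right _ _) hn
    have hsup : sSup (RS n) ≤ 1 + ε₀ / 2 := by
      apply Real.sSup_le _ (by linarith)
      rintro r ⟨b, hb1, _, rfl⟩
      exact le_of_lt (hN₁ n hn₁ b hb1)
    have hinv : 1 / ((n : ℝ) + 1) < ε₀ / 2 := by
      have h2 : (2:ℝ) / ε₀ ≤ N₂ := Nat.le_ceil _
      have h3 : (N₂ : ℝ) ≤ n := Nat.cast_le.mpr hn₂
      have h4 : (2:ℝ) / ε₀ < (n : ℝ) + 1 := by linarith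
      have h5 : (0:ℝ) < (n : ℝ) + 1 := by positivity
      have h6 : 2 < ε₀ * ((n:ℝ) + 1) := by
        rw [div_lt_iff₀ hε₀] at h4
        nlinarith
      rw [div_lt_iff₀ h5]
      nlinarith
    have hma : max (sSup (RS n)) 1 ≤ 1 + ε₀ / 2 := max_le hsup (by linarith)
    have hlo : (1:ℝ) ≤ max (sSup (RS n)) 1 := le_max_right _ _
    have hpos : (0:ℝ) < 1 / ((n : ℝ) + 1) := by positivity
    rw [Real.dist_eq, abs_lt]
    constructor <;> push_cast <;> [linarith; linarith]
  · -- the bound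
    intro a ha n _
    set b : ℕ → ℕ := fun k => if k ≤ n then a k else 1 with hbdef
    have hcongr1 : S.cyl b (n + 1) = S.cyl a (n + 1) := by
      unfold DDecaying.cyl
      rw [comp_congr S (a := b) (b := a)
        (fun k hk => by simp [hbdef, Nat.lt_succ_iff.mp hk])]
    have hcongr0 : S.cyl b n = S.cyl a n := by
      unfold DDecaying.cyl
      rw [comp_congr S (a := b) (b := a)
        (fun k hk => by simp [hbdef, Nat.le_of_lt hk])]
    have hmem : ratio a n ∈ RS n := by
      refine ⟨b, fun k hk => by simpa [hbdef, hk] using ha k, fun k hk => by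
        simp [hbdef, Nat.not_le.mpr hk], ?_⟩
      simp only [hratiodef, hcongr1, hcongr0]
    have h1 : ratio a n ≤ sSup (RS n) := le_csSup (hbdd n) hmem
    have h2 : sSup (RS n) ≤ max (sSup (RS n)) 1 := le_max_left _ _
    have hpos : (0:ℝ) < 1 / ((n : ℝ) + 1) := by positivity
    calc Real.log (Metric.diam (S.cyl a (n + 1))) / Real.log (Metric.diam (S.cyl a n))
        = ratio a n := rfl
      _ < max (sSup (RS n)) 1 + 1 / (n + 1) := by linarith
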